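/- Let M ∈ M_n(Z_p) be a block matrix M = [[A, C], [E, B]] with A of size a×a and B of size b×b, and suppose every entry of E is divisible by ε, where ε is a positive power of p. Suppose moreover that modulo p, χ_B(t) ≡ (t − λ)^b with χ_A(λ) ≢ 0 (mod p) for λ = 0. Then the characteristic polynomial χ_M factors in Z_p[t] as χ_M = χ_big · χ_small with χ_big ≡ χ_A (mod ε) and χ_small ≡ χ_B (mod ε); moreover this factorization into monic polynomials is unique modulo ε. -/

import Mathlib

open Matrix Polynomial

namespace Statement9Aux

variable {p : ℕ} [Fact p.Prime]

lemma dvd_p_iff (x : ℤ_[p]) : (p:ℤ_[p]) ∣ x ↔ PadicInt.toZMod x = 0 := by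
  rw [← RingHom.mem_ker, PadicInt.ker_toZMod, PadicInt.maximalIdeal_eq_span_p,
    Ideal.mem_span_singleton]

lemma map_toZMod_eq_zero_iff (q : Polynomial ℤ_[p]) :
    q.map PadicInt.toZMod = 0 ↔ ∀ i, (p:ℤ_[p]) ∣ q.coeff i := by
  simp only [Polynomial.ext_iff, coeff_map, coeff_zero, dvd_p_iff]

lemma map_toZMod_eq_iff (q r : Polynomial ℤ_[p]) :
    q.map PadicInt.toZMod = r.map PadicInt.toZMod ↔ ∀ i, (p:ℤ_[p]) ∣ (q - r).coeff i := by
  rw [← sub_eq_zero, ← Polynomial.map_sub, map_toZMod_eq_zero_iff]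

lemma dvd_coeff_mul {d : ℤ_[p]} {q : Polynomial ℤ_[p]} (r : Polynomial ℤ_[p])
    (h : ∀ i, d ∣ q.coeff i) (i : ℕ) : d ∣ (q * r).coeff i :=
  (C_dvd_iff_dvd_coeff _ _).mp (((C_dvd_iff_dvd_coeff _ _).mpr h).mul_right r) i

/-- lift a polynomial over `ZMod p` to `ℤ_[p]` with degree control -/
lemma exists_lift (q : Polynomial (ZMod p)) :
    ∃ Q : Polynomial ℤ_[p], Q.map PadicInt.toZMod = q ∧ Q.degree ≤ q.degree := by
  refine ⟨∑ i ∈ q.support, C (((q.coeff i).val : ℤ_[p])) * X ^ i, ?_, ?_⟩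
  · ext n
    simp only [coeff_map, finset_sum_coeff, coeff_C_mul, coeff_X_pow, mul_ite, mul_one, mul_zero,
      Finset.sum_ite_eq q.support n, Finset.sum_ite_eq' q.support n]
    split_ifs with h
    · push_cast
      rw [map_natCast]
      exact ZMod.natCast_rightInverse _
    · rw [notMem_support_iff.mp h]
      simp
  · refine degree_le_iff_coeff_zero _ _ |>.mpr fun n hn => ?_
    simp only [finset_sum_coeff, coeff_C_mul, coeff_X_pow, mul_ite, mul_one, mul_zero,
      Finset.sum_ite_eq q.support n, Finset.sum_ite_eq' q.support n]
    have : n ∉ q.support := fun hmem => absurd (le_degree_of_mem_supp _ hmem) (not_le.mpr hn)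
    simp [this]

lemma pPow_ne_zero (m : ℕ) : ((p:ℤ_[p]))^m ≠ 0 :=
  pow_ne_zero _ (by exact_mod_cast (Fact.out : p.Prime).ne_zero)

lemma monic_degree_eq {g g' : Polynomial ℤ_[p]} (hg : g.Monic) (hg' : g'.Monic)
    (hmap : g.map PadicInt.toZMod = g'.map PadicInt.toZMod) : g.degree = g'.degree := by
  rw [← hg.degree_map (f := PadicInt.toZMod), ← hg'.degree_map (f := PadicInt.toZMod), hmap]

lemma unique_factor (g' h' : Polynomial ℤ_[p]) (hg' : g'.Monic) (hh' : h'.Monic)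
    (hcop : IsCoprime (g'.map PadicInt.toZMod) (h'.map PadicInt.toZMod)) :
    ∀ m : ℕ, ∀ g h : Polynomial ℤ_[p], g.Monic → h.Monic →
      g.map PadicInt.toZMod = g'.map PadicInt.toZMod →
      h.map PadicInt.toZMod = h'.map PadicInt.toZMod →
      (∀ i, (p:ℤ_[p])^m ∣ (g*h - g'*h').coeff i) →
      (∀ i, (p:ℤ_[p])^m ∣ (g - g').coeff i) ∧ (∀ i, (p:ℤ_[p])^m ∣ (h - h').coeff i) := by
  intro m
  induction m with
  | zero => intro g h _ _ _ _ _; simp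
  | succ m ih =>
    intro g h hg hh hgm hhm hprod
    rcases Nat.eq_zero_or_pos m with rfl | hm1
    · rw [pow_one]
      exact ⟨(map_toZMod_eq_iff _ _).mp hgm, (map_toZMod_eq_iff _ _).mp hhm⟩
    have hstep := ih g h hg hh hgm hhm
      (fun i => dvd_trans (pow_dvd_pow _ (Nat.le_succ m)) (hprod i))
    obtain ⟨u, hu⟩ := (C_dvd_iff_dvd_coeff ((p:ℤ_[p])^m) (g - g')).mpr hstep.1
    obtain ⟨v, hv⟩ := (C_dvd_iff_dvd_coeff ((p:ℤ_[p])^m) (h - h')).mpr hstep.2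
    -- g = g' + C p^m * u, h = h' + C p^m * v
    have hgeq : g = g' + C ((p:ℤ_[p])^m) * u := by rw [← hu]; ring
    have hheq : h = h' + C ((p:ℤ_[p])^m) * v := by rw [← hv]; ring
    have hexp : g*h - g'*h' = C ((p:ℤ_[p])^m) * (u*h' + v*g' + C ((p:ℤ_[p])^m) * (u*v)) := by
      rw [hgeq, hheq]; ring
    -- p divides all coeffs of w := u*h' + v*g' + C p^m * (u*v)
    have hw : ∀ i, (p:ℤ_[p]) ∣ (u*h' + v*g' + C ((p:ℤ_[p])^m) * (u*v)).coeff i := by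
      intro i
      have h1 := hprod i
      rw [hexp, coeff_C_mul, pow_succ] at h1
      exact (mul_dvd_mul_iff_left (pPow_ne_zero m)).mp h1
    have hwmap : (u.map PadicInt.toZMod) * (h'.map PadicInt.toZMod)
        + (v.map PadicInt.toZMod) * (g'.map PadicInt.toZMod) = 0 := by
      have := (map_toZMod_eq_zero_iff _).mpr hw
      have hpm : PadicInt.toZMod ((p:ℤ_[p])^m) = 0 := by
        rw [← dvd_p_iff]
        exact dvd_pow_self (p:ℤ_[p]) hm1.ne'
      simpa [Polynomial.map_add, Polynomial.map_mul, map_C, hpm, zero_pow hm1.ne'] using this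
    -- degree bounds
    have hdg : (g - g').degree < g'.degree := by
      have := degree_sub_lt (monic_degree_eq hg hg' hgm) hg.ne_zero
        (by rw [hg.leadingCoeff, hg'.leadingCoeff])
      rwa [monic_degree_eq hg hg' hgm] at this
    have hdh : (h - h').degree < h'.degree := by
      have := degree_sub_lt (monic_degree_eq hh hh' hhm) hh.ne_zero
        (by rw [hh.leadingCoeff, hh'.leadingCoeff])
      rwa [monic_degree_eq hh hh' hhm] at this
    obtain ⟨s, t, hst⟩ := hcop
    have hu0 : u.map PadicInt.toZMod = 0 := by
      rcases eq_or_ne u 0 with rfl | hne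
      · simp
      have hdu : (u.map PadicInt.toZMod).degree < (g'.map PadicInt.toZMod).degree := by
        calc (u.map PadicInt.toZMod).degree ≤ u.degree := degree_map_le
          _ = (C ((p:ℤ_[p])^m) * u).degree := by
              rw [degree_mul, degree_C (pPow_ne_zero m), zero_add]
          _ = (g - g').degree := by rw [hu]
          _ < g'.degree := hdg
          _ = (g'.map PadicInt.toZMod).degree := (hg'.degree_map _).symm
      have hdvd : (g'.map PadicInt.toZMod) ∣ (u.map PadicInt.toZMod) :=
        ⟨s * (u.map PadicInt.toZMod) - t * (v.map PadicInt.toZMod), by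
          linear_combination (-(u.map PadicInt.toZMod)) * hst + t * hwmap⟩
      exact eq_zero_of_dvd_of_degree_lt hdvd hdu
    have hv0 : v.map PadicInt.toZMod = 0 := by
      rcases eq_or_ne v 0 with rfl | hne
      · simp
      have hdv : (v.map PadicInt.toZMod).degree < (h'.map PadicInt.toZMod).degree := by
        calc (v.map PadicInt.toZMod).degree ≤ v.degree := degree_map_le
          _ = (C ((p:ℤ_[p])^m) * v).degree := by
              rw [degree_mul, degree_C (pPow_ne_zero m), zero_add]
          _ = (h - h').degree := by rw [hv]
          _ < h'.degree := hdh
          _ = (h'.map PadicInt.toZMod).degree := (hh'.degree_map _).symm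
      have hdvd : (h'.map PadicInt.toZMod) ∣ (v.map PadicInt.toZMod) :=
        ⟨t * (v.map PadicInt.toZMod) - s * (u.map PadicInt.toZMod), by
          linear_combination (-(v.map PadicInt.toZMod)) * hst + s * hwmap⟩
      exact eq_zero_of_dvd_of_degree_lt hdvd hdv
    constructor
    · intro i
      rw [hu, coeff_C_mul, pow_succ]
      exact mul_dvd_mul_left _ ((map_toZMod_eq_zero_iff _).mp hu0 i)
    · intro i
      rw [hv, coeff_C_mul, pow_succ]
      exact mul_dvd_mul_left _ ((map_toZMod_eq_zero_iff _).mp hv0 i)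

lemma eq_zero_of_forall_pow_dvd (x : ℤ_[p]) (h : ∀ n, (p:ℤ_[p])^n ∣ x) : x = 0 := by
  refine IsHausdorff.haus (inferInstance : IsHausdorff (IsLocalRing.maximalIdeal ℤ_[p]) ℤ_[p]) x ?_
  intro n
  simp only [← Ideal.one_eq_top, smul_eq_mul, mul_one, SModEq.sub_mem,
    PadicInt.maximalIdeal_eq_span_p, Ideal.span_singleton_pow, Ideal.mem_span_singleton, sub_zero]
  exact h n

lemma exists_lim (x : ℕ → ℤ_[p]) (hx : ∀ m n, m ≤ n → (p:ℤ_[p])^m ∣ (x n - x m)) :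
    ∃ L, ∀ n, (p:ℤ_[p])^n ∣ (x n - L) := by
  have := IsPrecomplete.prec
    (inferInstance : IsPrecomplete (IsLocalRing.maximalIdeal ℤ_[p]) ℤ_[p]) (f := x) ?_
  · obtain ⟨L, hL⟩ := this
    refine ⟨L, fun n => ?_⟩
    have := hL n
    simp only [← Ideal.one_eq_top, smul_eq_mul, mul_one, SModEq.sub_mem,
      PadicInt.maximalIdeal_eq_span_p, Ideal.span_singleton_pow,
      Ideal.mem_span_singleton] at this
    exact this
  · intro m n hmn
    simp only [← Ideal.one_eq_top, smul_eq_mul, mul_one, SModEq.sub_mem,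
      PadicInt.maximalIdeal_eq_span_p, Ideal.span_singleton_pow, Ideal.mem_span_singleton]
    have := hx m n hmn
    rw [← neg_sub, dvd_neg] at this
    exact this

lemma hensel_step (g₀ h₀ : Polynomial ℤ_[p]) (hg₀ : g₀.Monic) (hh₀ : h₀.Monic)
    (hcop : IsCoprime (g₀.map PadicInt.toZMod) (h₀.map PadicInt.toZMod))
    (f : Polynomial ℤ_[p]) (hf : f.Monic)
    (hfd : f.degree = g₀.degree + h₀.degree)
    (m : ℕ) (hm : 1 ≤ m) (g h : Polynomial ℤ_[p]) (hg : g.Monic) (hh : h.Monic)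
    (hgdeg : g.degree = g₀.degree) (hhdeg : h.degree = h₀.degree)
    (hgm : g.map PadicInt.toZMod = g₀.map PadicInt.toZMod)
    (hhm : h.map PadicInt.toZMod = h₀.map PadicInt.toZMod)
    (hfgh : ∀ i, (p:ℤ_[p])^m ∣ (f - g*h).coeff i) :
    ∃ g' h' : Polynomial ℤ_[p], g'.Monic ∧ h'.Monic ∧
      g'.degree = g₀.degree ∧ h'.degree = h₀.degree ∧
      g'.map PadicInt.toZMod = g₀.map PadicInt.toZMod ∧
      h'.map PadicInt.toZMod = h₀.map PadicInt.toZMod ∧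
      (∀ i, (p:ℤ_[p])^(m+1) ∣ (f - g'*h').coeff i) ∧
      (∀ i, (p:ℤ_[p])^m ∣ (g' - g).coeff i) ∧ (∀ i, (p:ℤ_[p])^m ∣ (h' - h).coeff i) := by
  have hpm0 : PadicInt.toZMod ((p:ℤ_[p])^m) = 0 := by
    rw [← dvd_p_iff]
    exact dvd_pow_self (p:ℤ_[p]) (Nat.one_le_iff_ne_zero.mp hm)
  have hm0 : m ≠ 0 := Nat.one_le_iff_ne_zero.mp hm
  obtain ⟨c, hc⟩ := (C_dvd_iff_dvd_coeff ((p:ℤ_[p])^m) (f - g*h)).mpr hfgh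
  have hghmonic : (g*h).Monic := hg.mul hh
  have hdegc : c.degree < g₀.degree + h₀.degree := by
    have h1 : (f - g*h).degree < f.degree := by
      refine degree_sub_lt ?_ hf.ne_zero (by rw [hf.leadingCoeff, hghmonic.leadingCoeff])
      rw [degree_mul, hgdeg, hhdeg, hfd]
    have h2 : c.degree = (f - g*h).degree := by
      rw [hc, degree_mul, degree_C (pPow_ne_zero m), zero_add]
    rw [h2]
    exact h1.trans_eq hfd
  set G : Polynomial (ZMod p) := g₀.map PadicInt.toZMod with hG
  set H : Polynomial (ZMod p) := h₀.map PadicInt.toZMod with hH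
  have hGmonic : G.Monic := hg₀.map _
  have hHmonic : H.Monic := hh₀.map _
  have hGdeg : G.degree = g₀.degree := hg₀.degree_map _
  have hHdeg : H.degree = h₀.degree := hh₀.degree_map _
  obtain ⟨s, t, hst⟩ := hcop
  set cc : Polynomial (ZMod p) := c.map PadicInt.toZMod with hcc
  set U : Polynomial (ZMod p) := (t * cc) %ₘ G with hU
  have hUdeg : U.degree < G.degree := degree_modByMonic_lt _ hGmonic
  have hmoddiv := modByMonic_add_div (t * cc) G
  have hdvd : cc - U * H = G * (cc * s + ((t * cc) /ₘ G) * H) := by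
    linear_combination (-cc) * hst + (-H) * hmoddiv
  set V : Polynomial (ZMod p) := cc * s + ((t * cc) /ₘ G) * H with hV
  have hGbot : G.degree ≠ ⊥ := fun hbot => hGmonic.ne_zero (degree_eq_bot.mp hbot)
  have hHbot : H.degree ≠ ⊥ := fun hbot => hHmonic.ne_zero (degree_eq_bot.mp hbot)
  have hsub : (cc - U * H).degree < G.degree + H.degree := by
    refine lt_of_le_of_lt (degree_sub_le _ _) (max_lt ?_ ?_)
    · refine lt_of_le_of_lt degree_map_le ?_
      rw [hGdeg, hHdeg]
      exact hdegc
    · rw [degree_mul]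
      rcases eq_or_ne U 0 with hU0 | hU0
      · rw [hU0, degree_zero, WithBot.bot_add]
        exact Ne.bot_lt (by
          rw [hGdeg, hHdeg, degree_eq_natDegree hg₀.ne_zero, degree_eq_natDegree hh₀.ne_zero,
            ← Nat.cast_add]
          exact WithBot.natCast_ne_bot _)
      · exact WithBot.add_lt_add_right hHbot hUdeg
  have hVdeg : V.degree < H.degree := by
    rcases eq_or_ne V 0 with hV0 | hV0
    · rw [hV0, degree_zero]
      exact Ne.bot_lt (fun hb => hHmonic.ne_zero (degree_eq_bot.mp hb))
    · have : G.degree + V.degree < G.degree + H.degree := by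
        rw [← degree_mul, ← hdvd]
        exact hsub
      exact (WithBot.add_lt_add_iff_left hGbot).mp this
  obtain ⟨Ul, hUl, hUldeg⟩ := exists_lift U
  obtain ⟨Vl, hVl, hVldeg⟩ := exists_lift V
  have hUldeg' : Ul.degree < g.degree := by
    rw [hgdeg, ← hGdeg]
    exact hUldeg.trans_lt hUdeg
  have hVldeg' : Vl.degree < h.degree := by
    rw [hhdeg, ← hHdeg]
    exact hVldeg.trans_lt hVdeg
  have hcgU : (C ((p:ℤ_[p])^m) * Ul).degree = Ul.degree := by
    rw [degree_mul, degree_C (pPow_ne_zero m), zero_add]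
  have hcgV : (C ((p:ℤ_[p])^m) * Vl).degree = Vl.degree := by
    rw [degree_mul, degree_C (pPow_ne_zero m), zero_add]
  refine ⟨g + C ((p:ℤ_[p])^m) * Ul, h + C ((p:ℤ_[p])^m) * Vl,
    hg.add_of_left (hcgU ▸ hUldeg'), hh.add_of_left (hcgV ▸ hVldeg'),
    by rw [degree_add_eq_left_of_degree_lt (hcgU ▸ hUldeg'), hgdeg],
    by rw [degree_add_eq_left_of_degree_lt (hcgV ▸ hVldeg'), hhdeg],
    by simp [Polynomial.map_add, Polynomial.map_mul, map_C, hpm0, hgm, hm0],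
    by simp [Polynomial.map_add, Polynomial.map_mul, map_C, hpm0, hhm, hm0],
    ?_, ?_, ?_⟩
  · -- main congruence mod p^(m+1)
    have key : f - (g + C ((p:ℤ_[p])^m) * Ul) * (h + C ((p:ℤ_[p])^m) * Vl)
        = C ((p:ℤ_[p])^m) * (c - (Ul*h + Vl*g + C ((p:ℤ_[p])^m) * (Ul*Vl))) := by
      linear_combination hc
    have hz : ∀ i, (p:ℤ_[p]) ∣ (c - (Ul*h + Vl*g + C ((p:ℤ_[p])^m) * (Ul*Vl))).coeff i := by
      rw [← map_toZMod_eq_zero_iff]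
      have : (c - (Ul*h + Vl*g + C ((p:ℤ_[p])^m) * (Ul*Vl))).map PadicInt.toZMod
          = cc - (U * H + V * G) := by
        simp [Polynomial.map_sub, Polynomial.map_add, Polynomial.map_mul, map_C, hpm0,
          hUl, hVl, hgm, hhm, hcc, hm0]
      rw [this]
      linear_combination hdvd
    intro i
    rw [key, coeff_C_mul, pow_succ]
    exact mul_dvd_mul_left _ (hz i)
  · intro i
    rw [add_sub_cancel_left, coeff_C_mul]
    exact Dvd.intro _ rfl
  · intro i
    rw [add_sub_cancel_left, coeff_C_mul]
    exact Dvd.intro _ rfl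

lemma hensel_lift (g₀ h₀ : Polynomial ℤ_[p]) (hg₀ : g₀.Monic) (hh₀ : h₀.Monic)
    (hcop : IsCoprime (g₀.map PadicInt.toZMod) (h₀.map PadicInt.toZMod))
    (f : Polynomial ℤ_[p]) (hf : f.Monic) (hfd : f.degree = g₀.degree + h₀.degree)
    (k : ℕ) (hk : 1 ≤ k)
    (hfgh : ∀ i, (p:ℤ_[p])^k ∣ (f - g₀*h₀).coeff i) :
    ∃ g h : Polynomial ℤ_[p], g.Monic ∧ h.Monic ∧ f = g*h ∧
      (∀ i, (p:ℤ_[p])^k ∣ (g - g₀).coeff i) ∧ (∀ i, (p:ℤ_[p])^k ∣ (h - h₀).coeff i) := by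
  classical
  set a := g₀.natDegree with ha
  set b := h₀.natDegree with hb
  let Inv : ℕ → (Polynomial ℤ_[p] × Polynomial ℤ_[p]) → Prop := fun n gh =>
    gh.1.Monic ∧ gh.2.Monic ∧ gh.1.degree = g₀.degree ∧ gh.2.degree = h₀.degree ∧
    gh.1.map PadicInt.toZMod = g₀.map PadicInt.toZMod ∧
    gh.2.map PadicInt.toZMod = h₀.map PadicInt.toZMod ∧
    (∀ i, (p:ℤ_[p])^(k+n) ∣ (f - gh.1*gh.2).coeff i) ∧
    (∀ i, (p:ℤ_[p])^k ∣ (gh.1 - g₀).coeff i) ∧ (∀ i, (p:ℤ_[p])^k ∣ (gh.2 - h₀).coeff i)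
  have step : ∀ n (gh : Polynomial ℤ_[p] × Polynomial ℤ_[p]), Inv n gh → ∃ gh', Inv (n+1) gh' ∧
      (∀ i, (p:ℤ_[p])^(k+n) ∣ (gh'.1 - gh.1).coeff i) ∧
      (∀ i, (p:ℤ_[p])^(k+n) ∣ (gh'.2 - gh.2).coeff i) := by
    rintro n ⟨g, h⟩ ⟨h1,h2,h3,h4,h5,h6,h7,h8,h9⟩
    obtain ⟨g',h',s1,s2,s3,s4,s5,s6,s7,s8,s9⟩ :=
      hensel_step g₀ h₀ hg₀ hh₀ hcop f hf hfd (k+n) (le_trans hk (Nat.le_add_right k n)) g h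
        h1 h2 h3 h4 h5 h6 h7
    refine ⟨(g',h'), ⟨s1,s2,s3,s4,s5,s6, s7, ?_, ?_⟩, s8, s9⟩
    · intro i
      have hd : (p:ℤ_[p])^k ∣ ((g' - g) + (g - g₀)).coeff i := by
        rw [coeff_add]
        exact dvd_add ((pow_dvd_pow _ (Nat.le_add_right k n)).trans (s8 i)) (h8 i)
      simpa [sub_add_sub_cancel] using hd
    · intro i
      have hd : (p:ℤ_[p])^k ∣ ((h' - h) + (h - h₀)).coeff i := by
        rw [coeff_add]
        exact dvd_add ((pow_dvd_pow _ (Nat.le_add_right k n)).trans (s9 i)) (h9 i)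
      simpa [sub_add_sub_cancel] using hd
  have base : Inv 0 (g₀, h₀) := ⟨hg₀, hh₀, rfl, rfl, rfl, rfl, by simpa using hfgh,
    by simp, by simp⟩
  let seq : ∀ n : ℕ, {gh : Polynomial ℤ_[p] × Polynomial ℤ_[p] // Inv n gh} :=
    fun n => Nat.rec ⟨(g₀,h₀), base⟩
      (fun n ih => ⟨(step n ih.1 ih.2).choose, (step n ih.1 ih.2).choose_spec.1⟩) n
  have seq_succ_close : ∀ n,
      (∀ i, (p:ℤ_[p])^(k+n) ∣ ((seq (n+1)).1.1 - (seq n).1.1).coeff i) ∧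
      (∀ i, (p:ℤ_[p])^(k+n) ∣ ((seq (n+1)).1.2 - (seq n).1.2).coeff i) :=
    fun n => (step n (seq n).1 (seq n).2).choose_spec.2
  have seq_close : ∀ m n, m ≤ n →
      (∀ i, (p:ℤ_[p])^(k+m) ∣ ((seq n).1.1 - (seq m).1.1).coeff i) ∧
      (∀ i, (p:ℤ_[p])^(k+m) ∣ ((seq n).1.2 - (seq m).1.2).coeff i) := by
    intro m n hmn
    induction n, hmn using Nat.le_induction with
    | base => simp
    | succ n hmn ih =>
      constructor <;> intro i
      · have hd : (p:ℤ_[p])^(k+m) ∣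
            (((seq (n+1)).1.1 - (seq n).1.1) + ((seq n).1.1 - (seq m).1.1)).coeff i := by
          rw [coeff_add]
          exact dvd_add ((pow_dvd_pow _ (by omega)).trans ((seq_succ_close n).1 i)) (ih.1 i)
        simpa [sub_add_sub_cancel] using hd
      · have hd : (p:ℤ_[p])^(k+m) ∣
            (((seq (n+1)).1.2 - (seq n).1.2) + ((seq n).1.2 - (seq m).1.2)).coeff i := by
          rw [coeff_add]
          exact dvd_add ((pow_dvd_pow _ (by omega)).trans ((seq_succ_close n).2 i)) (ih.2 i)
        simpa [sub_add_sub_cancel] using hd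
  -- limits of the coefficient sequences
  have hgex : ∀ j, ∃ L, ∀ n, (p:ℤ_[p])^n ∣ ((seq n).1.1.coeff j - L) := by
    intro j
    refine exists_lim (fun n => (seq n).1.1.coeff j) (fun m n hmn => ?_)
    have := (seq_close m n hmn).1 j
    rw [coeff_sub] at this
    exact (pow_dvd_pow _ (Nat.le_add_left m k)).trans this
  have hhex : ∀ j, ∃ L, ∀ n, (p:ℤ_[p])^n ∣ ((seq n).1.2.coeff j - L) := by
    intro j
    refine exists_lim (fun n => (seq n).1.2.coeff j) (fun m n hmn => ?_)
    have := (seq_close m n hmn).2 j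
    rw [coeff_sub] at this
    exact (pow_dvd_pow _ (Nat.le_add_left m k)).trans this
  choose Lg hLg using hgex
  choose Lh hLh using hhex
  set glim : Polynomial ℤ_[p] := X^a + ∑ j ∈ Finset.range a, C (Lg j) * X^j with hglim
  set hlim : Polynomial ℤ_[p] := X^b + ∑ j ∈ Finset.range b, C (Lh j) * X^j with hhlim
  have hsumdeg : ∀ (c : ℕ → ℤ_[p]) (n : ℕ),
      (∑ j ∈ Finset.range n, C (c j) * X^j).degree < (X^n : Polynomial ℤ_[p]).degree := by
    intro c n
    rw [degree_X_pow]
    refine lt_of_le_of_lt (degree_sum_le _ _) ?_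
    rw [Finset.sup_lt_iff (by exact_mod_cast WithBot.bot_lt_coe n)]
    intro j hj
    exact lt_of_le_of_lt (degree_C_mul_X_pow_le _ _) (by exact_mod_cast Finset.mem_range.mp hj)
  have hglim_monic : glim.Monic := (monic_X_pow a).add_of_left (hsumdeg Lg a)
  have hhlim_monic : hlim.Monic := (monic_X_pow b).add_of_left (hsumdeg Lh b)
  have hglim_deg : glim.degree = ↑a := by
    rw [hglim, degree_add_eq_left_of_degree_lt (hsumdeg Lg a), degree_X_pow]
  have hhlim_deg : hlim.degree = ↑b := by
    rw [hhlim, degree_add_eq_left_of_degree_lt (hsumdeg Lh b), degree_X_pow]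
  have hcoeff_formula : ∀ (c : ℕ → ℤ_[p]) (n j : ℕ),
      (X^n + ∑ i ∈ Finset.range n, C (c i) * X^i).coeff j
        = if j = n then 1 else (if j < n then c j else 0) := by
    intro c n j
    rw [coeff_add, coeff_X_pow, finset_sum_coeff]
    simp only [coeff_C_mul, coeff_X_pow, mul_ite, mul_one, mul_zero]
    rw [Finset.sum_ite_eq (Finset.range n) j]
    rcases lt_trichotomy j n with hlt | heq | hgt
    · simp [Finset.mem_range.mpr hlt, hlt.ne, hlt]
    · simp [heq, lt_irrefl]
    · simp [Finset.mem_range, not_lt.mpr hgt.le, hgt.ne']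
  have hg_close : ∀ n j, (p:ℤ_[p])^n ∣ (glim - (seq n).1.1).coeff j := by
    intro n j
    obtain ⟨m1, m2, d1, d2, -, -, -, -, -⟩ := (seq n).2
    have hdeg : (seq n).1.1.degree = (a : WithBot ℕ) := by
      rw [d1, ha, degree_eq_natDegree hg₀.ne_zero]
    rw [coeff_sub, hglim, hcoeff_formula]
    rcases lt_trichotomy j a with hlt | heq | hgt
    · rw [if_neg hlt.ne, if_pos hlt]
      have h1 := hLg j n
      rw [show Lg j - (seq n).1.1.coeff j = -((seq n).1.1.coeff j - Lg j) by ring]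
      exact dvd_neg.mpr h1
    · rw [if_pos heq, heq]
      have hnd : (seq n).1.1.natDegree = a := natDegree_eq_of_degree_eq_some hdeg
      rw [← hnd, m1.coeff_natDegree, sub_self]
      exact dvd_zero _
    · rw [if_neg (by omega), if_neg (by omega)]
      rw [coeff_eq_zero_of_degree_lt (by rw [hdeg]; exact_mod_cast hgt), zero_sub, neg_zero]
      exact dvd_zero _
  have hh_close : ∀ n j, (p:ℤ_[p])^n ∣ (hlim - (seq n).1.2).coeff j := by
    intro n j
    obtain ⟨m1, m2, d1, d2, -, -, -, -, -⟩ := (seq n).2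
    have hdeg : (seq n).1.2.degree = (b : WithBot ℕ) := by
      rw [d2, hb, degree_eq_natDegree hh₀.ne_zero]
    rw [coeff_sub, hhlim, hcoeff_formula]
    rcases lt_trichotomy j b with hlt | heq | hgt
    · rw [if_neg hlt.ne, if_pos hlt]
      have h1 := hLh j n
      rw [show Lh j - (seq n).1.2.coeff j = -((seq n).1.2.coeff j - Lh j) by ring]
      exact dvd_neg.mpr h1
    · rw [if_pos heq, heq]
      have hnd : (seq n).1.2.natDegree = b := natDegree_eq_of_degree_eq_some hdeg
      rw [← hnd, m2.coeff_natDegree, sub_self]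
      exact dvd_zero _
    · rw [if_neg (by omega), if_neg (by omega)]
      rw [coeff_eq_zero_of_degree_lt (by rw [hdeg]; exact_mod_cast hgt), zero_sub, neg_zero]
      exact dvd_zero _
  have hfactor : f = glim * hlim := by
    rw [← sub_eq_zero]
    refine Polynomial.ext fun j => ?_
    rw [coeff_zero]
    refine eq_zero_of_forall_pow_dvd _ (fun n => ?_)
    have hid : f - glim*hlim = (f - (seq n).1.1*(seq n).1.2)
        + ((((seq n).1.1 - glim)*(seq n).1.2) + (((seq n).1.2 - hlim)*glim)) := by ring
    rw [hid, coeff_add, coeff_add]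
    refine dvd_add ?_ (dvd_add ?_ ?_)
    · obtain ⟨-, -, -, -, -, -, hprod, -, -⟩ := (seq n).2
      exact (pow_dvd_pow _ (Nat.le_add_left n k)).trans (hprod j)
    · refine dvd_coeff_mul _ (fun i => ?_) j
      have h1 := hg_close n i
      rw [show ((seq n).1.1 - glim).coeff i = -((glim - (seq n).1.1).coeff i) by
        rw [coeff_sub, coeff_sub]; ring]
      exact dvd_neg.mpr h1
    · refine dvd_coeff_mul _ (fun i => ?_) j
      have h1 := hh_close n i
      rw [show ((seq n).1.2 - hlim).coeff i = -((hlim - (seq n).1.2).coeff i) by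
        rw [coeff_sub, coeff_sub]; ring]
      exact dvd_neg.mpr h1
  refine ⟨glim, hlim, hglim_monic, hhlim_monic, hfactor, ?_, ?_⟩
  · intro i
    obtain ⟨-, -, -, -, -, -, -, hgg₀, -⟩ := (seq k).2
    have hd : (p:ℤ_[p])^k ∣ ((glim - (seq k).1.1) + ((seq k).1.1 - g₀)).coeff i := by
      rw [coeff_add]
      exact dvd_add (hg_close k i) (hgg₀ i)
    simpa [sub_add_sub_cancel] using hd
  · intro i
    obtain ⟨-, -, -, -, -, -, -, -, hhh₀⟩ := (seq k).2
    have hd : (p:ℤ_[p])^k ∣ ((hlim - (seq k).1.2) + ((seq k).1.2 - h₀)).coeff i := by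
      rw [coeff_add]
      exact dvd_add (hh_close k i) (hhh₀ i)
    simpa [sub_add_sub_cancel] using hd
end Statement9Aux

set_option maxHeartbeats 1000000 in
set_option synthInstance.maxHeartbeats 400000 in
open Statement9Aux in
/-- for a size-sorted block matrix `M = [[A, C], [E, B]]` with `E ≡ 0 mod ε`
(`ε = p^k` a positive power of `p`), `χ_B ≡ t^b mod p`, and `χ_A(0) ≢ 0 mod p`, the
characteristic polynomial factors as `χ_M = χ_big ⋅ χ_small` in `ℤ_p[t]` with
`χ_big ≡ χ_A` and `χ_small ≡ χ_B (mod ε)`, and this factorization into monic polynomials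
is unique modulo `ε`. -/
theorem statement9 {p : ℕ} [Fact p.Prime] {a b : ℕ}
    (A : Matrix (Fin a) (Fin a) ℤ_[p]) (C : Matrix (Fin a) (Fin b) ℤ_[p])
    (E : Matrix (Fin b) (Fin a) ℤ_[p]) (B : Matrix (Fin b) (Fin b) ℤ_[p])
    (k : ℕ) (hk : 1 ≤ k)
    (hE : ∀ i j, (p : ℤ_[p]) ^ k ∣ E i j)
    (hB : B.charpoly.map (PadicInt.toZMod) = X ^ b)
    (hA : PadicInt.toZMod (A.charpoly.eval 0) ≠ 0) :
    ∃ χbig χsmall : Polynomial ℤ_[p],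
      χbig.Monic ∧ χsmall.Monic ∧
      (Matrix.fromBlocks A C E B).charpoly = χbig * χsmall ∧
      (∀ i, (p : ℤ_[p]) ^ k ∣ (χbig - A.charpoly).coeff i) ∧
      (∀ i, (p : ℤ_[p]) ^ k ∣ (χsmall - B.charpoly).coeff i) ∧
      ∀ g h : Polynomial ℤ_[p], g.Monic → h.Monic →
        (∀ i, (p : ℤ_[p]) ^ k ∣ ((Matrix.fromBlocks A C E B).charpoly - g * h).coeff i) →
        (∀ i, (p : ℤ_[p]) ∣ (g - A.charpoly).coeff i) →
        (∀ i, (p : ℤ_[p]) ∣ (h - B.charpoly).coeff i) →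
        (∀ i, (p : ℤ_[p]) ^ k ∣ (g - χbig).coeff i) ∧
        (∀ i, (p : ℤ_[p]) ^ k ∣ (h - χsmall).coeff i) := by
  set f : Polynomial ℤ_[p] := (Matrix.fromBlocks A C E B).charpoly with hfdef
  set g₀ : Polynomial ℤ_[p] := A.charpoly with hg₀def
  set h₀ : Polynomial ℤ_[p] := B.charpoly with hh₀def
  have hf : f.Monic := Matrix.charpoly_monic _
  have hg₀ : g₀.Monic := Matrix.charpoly_monic _
  have hh₀ : h₀.Monic := Matrix.charpoly_monic _
  have hfdeg : f.degree = g₀.degree + h₀.degree := by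
    rw [hfdef, hg₀def, hh₀def, Matrix.charpoly_degree_eq_dim, Matrix.charpoly_degree_eq_dim,
      Matrix.charpoly_degree_eq_dim, Fintype.card_sum, Fintype.card_fin, Fintype.card_fin,
      Nat.cast_add]
  -- congruence f ≡ g₀ h₀ mod p^k
  have hfgh : ∀ i, (p:ℤ_[p])^k ∣ (f - g₀*h₀).coeff i := by
    set I : Ideal ℤ_[p] := Ideal.span {(p:ℤ_[p])^k} with hI
    set φ : ℤ_[p] →+* ℤ_[p] ⧸ I := Ideal.Quotient.mk I with hφ
    have hmap : (f - g₀*h₀).map φ = 0 := by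
      have hE0 : E.map φ = 0 := by
        ext i j
        exact Ideal.Quotient.eq_zero_iff_mem.mpr (Ideal.mem_span_singleton.mpr (hE i j))
      rw [Polynomial.map_sub, Polynomial.map_mul, hfdef, hg₀def, hh₀def,
        ← Matrix.charpoly_map, ← Matrix.charpoly_map, ← Matrix.charpoly_map,
        Matrix.fromBlocks_map, hE0, Matrix.charpoly_fromBlocks_zero₂₁, sub_self]
    intro i
    have := congrArg (fun q => Polynomial.coeff q i) hmap
    simp only [coeff_map, coeff_zero] at this
    exact Ideal.mem_span_singleton.mp (Ideal.Quotient.eq_zero_iff_mem.mp this)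
  -- coprimality mod p
  have hcop : IsCoprime (g₀.map PadicInt.toZMod) (h₀.map PadicInt.toZMod) := by
    rw [hh₀def, hB]
    set G : Polynomial (ZMod p) := g₀.map PadicInt.toZMod with hG
    have hu : G.eval 0 ≠ 0 := by
      rw [hG, eval_zero_map]
      exact hA
    have hX : IsCoprime G (X : Polynomial (ZMod p)) := by
      have h1 := modByMonic_add_div G (X : Polynomial (ZMod p))
      rw [modByMonic_X] at h1
      have h2 : Polynomial.C (G.eval 0)⁻¹ * Polynomial.C (G.eval 0) = 1 := by
        rw [← Polynomial.C_mul, inv_mul_cancel₀ hu, Polynomial.C_1]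
      refine ⟨Polynomial.C (G.eval 0)⁻¹, -(Polynomial.C (G.eval 0)⁻¹ * (G /ₘ X)), ?_⟩
      linear_combination (-(Polynomial.C (G.eval 0)⁻¹)) * h1 + h2
    exact hX.pow_right
  obtain ⟨χbig, χsmall, hbm, hsm, hfact, hbc, hsc⟩ :=
    hensel_lift g₀ h₀ hg₀ hh₀ hcop f hf hfdeg k hk hfgh
  refine ⟨χbig, χsmall, hbm, hsm, hfact, hbc, hsc, ?_⟩
  intro g h hg hh hgh hgA hhB
  have hk0 : k ≠ 0 := Nat.one_le_iff_ne_zero.mp hk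
  have hbig_map : χbig.map PadicInt.toZMod = g₀.map PadicInt.toZMod :=
    (map_toZMod_eq_iff _ _).mpr fun i => (dvd_pow_self (p:ℤ_[p]) hk0).trans (hbc i)
  have hsmall_map : χsmall.map PadicInt.toZMod = h₀.map PadicInt.toZMod :=
    (map_toZMod_eq_iff _ _).mpr fun i => (dvd_pow_self (p:ℤ_[p]) hk0).trans (hsc i)
  have hg_map : g.map PadicInt.toZMod = χbig.map PadicInt.toZMod :=
    ((map_toZMod_eq_iff _ _).mpr hgA).trans hbig_map.symm
  have hh_map : h.map PadicInt.toZMod = χsmall.map PadicInt.toZMod :=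
    ((map_toZMod_eq_iff _ _).mpr hhB).trans hsmall_map.symm
  have hcop' : IsCoprime (χbig.map PadicInt.toZMod) (χsmall.map PadicInt.toZMod) := by
    rw [hbig_map, hsmall_map]
    exact hcop
  have hprod : ∀ i, (p:ℤ_[p])^k ∣ (g*h - χbig*χsmall).coeff i := by
    intro i
    rw [show g*h - χbig*χsmall = -(f - g*h) by rw [hfact]; ring, coeff_neg]
    exact dvd_neg.mpr (hgh i)
  exact unique_factor χbig χsmall hbm hsm hcop' k g h hg hh hg_map hh_map hprod
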